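/- Let G be a compactly generated totally disconnected locally compact Hausdorff group admitting an open subgroup H which is quasi-discrete. Then either G is compact, or G possesses an infinite discrete quotient: there is a closed normal subgroup N of G such that G/N is discrete and infinite. -/

import Mathlib

open scoped Pointwise Topology

/-- A topological group is *compactly generated* if it is generated, as a group,
by some compact subset. -/
def CompactlyGeneratedGroup (G : Type*) [Group G] [TopologicalSpace G] : Prop :=
  ∃ S : Set G, IsCompact S ∧ Subgroup.closure S = ⊤

/-- A topological group is *topologically simple* if it is non-trivial and its only
closed normal subgroups are the trivial subgroup and the whole group. -/
def IsTopologicallySimple (G : Type*) [Group G] [TopologicalSpace G] : Prop :=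
  Nontrivial G ∧ ∀ H : Subgroup G, H.Normal → IsClosed (H : Set G) → H = ⊥ ∨ H = ⊤

/-- Two topological groups are *topologically isomorphic* if there is a group
isomorphism between them which is also a homeomorphism. -/
def TopIsomorphic (G H : Type*) [Group G] [TopologicalSpace G] [Group H]
    [TopologicalSpace H] : Prop :=
  ∃ e : G ≃* H, Continuous e ∧ Continuous e.symm

/-- `G` is a quasi-product with quasi-factors `N 0, …, N (p-1)` if these are closed
normal subgroups of `G` such that the multiplication map `N 0 × ⋯ × N (p-1) → G`
is injective with dense image. -/
def IsQuasiProduct {G : Type*} [Group G] [TopologicalSpace G] {p : ℕ}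
    (N : Fin p → Subgroup G) : Prop :=
  (∀ i, (N i).Normal) ∧ (∀ i, IsClosed ((N i) : Set G)) ∧
  Function.Injective (fun x : (∀ i, ↥(N i)) => (List.ofFn fun i => (x i : G)).prod) ∧
  DenseRange (fun x : (∀ i, ↥(N i)) => (List.ofFn fun i => (x i : G)).prod)



section Aux

set_option linter.unusedSectionVars false

open Set Subgroup

variable {G : Type*} [Group G] [TopologicalSpace G] [IsTopologicalGroup G]

lemma exist_mul_closure_nhd' {W : Set G} (Wc : IsCompact W) (Wo : IsOpen W) :
    ∃ T ∈ 𝓝 (1 : G), W * T ⊆ W := by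
  apply Wc.induction_on (p := fun S ↦ ∃ T ∈ 𝓝 (1 : G), S * T ⊆ W)
    ⟨Set.univ, by simp only [Filter.univ_mem, empty_mul, empty_subset, and_self]⟩
    (fun _ _ huv ⟨T, hT, mem⟩ ↦ ⟨T, hT, (mul_subset_mul_right huv).trans mem⟩)
    fun U V ⟨T₁, hT₁, mem1⟩ ⟨T₂, hT₂, mem2⟩ ↦ ⟨T₁ ∩ T₂, Filter.inter_mem hT₁ hT₂, by
      rw [union_mul]
      exact union_subset (mul_subset_mul_left inter_subset_left |>.trans mem1)
        (mul_subset_mul_left inter_subset_right |>.trans mem2)⟩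
  intro x memW
  have : (x, 1) ∈ (fun p : G × G ↦ p.1 * p.2) ⁻¹' W := by simp [memW]
  rcases isOpen_prod_iff.mp (continuous_mul.isOpen_preimage W Wo) x 1 this with
    ⟨U, V, Uopen, Vopen, xmemU, onememV, prodsub⟩
  have h6 : U * V ⊆ W := mul_subset_iff.mpr (fun _ hx _ hy ↦ prodsub (mk_mem_prod hx hy))
  exact ⟨U ∩ W, ⟨U, Uopen.mem_nhds xmemU, W, fun _ a ↦ a, rfl⟩,
    V, IsOpen.mem_nhds Vopen onememV, fun _ a ↦ h6 ((mul_subset_mul_right inter_subset_left) a)⟩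

lemma exist_openSubgroup_sub' {W : Set G} (Wc : IsCompact W) (Wo : IsOpen W)
    (einW : (1 : G) ∈ W) : ∃ S : Subgroup G, IsOpen (S : Set G) ∧ (S : Set G) ⊆ W := by
  obtain ⟨S0, Smemnhds, mulclose⟩ := exist_mul_closure_nhd' Wc Wo
  rcases mem_nhds_iff.mp Smemnhds with ⟨U, UsubS, Uopen, onememU⟩
  set V : Set G := U ∩ U⁻¹ with hVdef
  have hVnhd : V ∈ 𝓝 (1 : G) := by
    exact Filter.inter_mem (Uopen.mem_nhds onememU) (Uopen.inv.mem_nhds (by simp [onememU]))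
  have hVinv : V⁻¹ = V := by simp [hVdef, inter_comm]
  have hVopen : IsOpen V := Uopen.inter Uopen.inv
  have hVmul : W * V ⊆ W := fun a ha ↦
    mulclose (mul_subset_mul_left UsubS (mul_subset_mul_left inter_subset_left ha))
  let S : Subgroup G := {
    carrier := ⋃ n, V ^ (n + 1)
    mul_mem' := fun ha hb ↦ by
      rcases mem_iUnion.mp ha with ⟨k, hk⟩
      rcases mem_iUnion.mp hb with ⟨l, hl⟩
      apply mem_iUnion.mpr
      use k + 1 + l
      rw [add_assoc, pow_add]
      exact Set.mul_mem_mul hk hl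
    one_mem' := by
      apply mem_iUnion.mpr
      use 0
      simp [mem_of_mem_nhds hVnhd]
    inv_mem' := fun ha ↦ by
      rcases mem_iUnion.mp ha with ⟨k, hk⟩
      apply mem_iUnion.mpr
      use k
      rw [← hVinv]
      simpa only [inv_pow, Set.mem_inv, inv_inv] using hk }
  have hSopen : IsOpen (⋃ n, V ^ (n + 1)) := by
    refine isOpen_iUnion (fun n ↦ ?_)
    rw [pow_succ]
    exact hVopen.mul_left
  refine ⟨S, hSopen, ?_⟩
  have mulVpow (n : ℕ) : W * V ^ (n + 1) ⊆ W := by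
    induction' n with n ih
    · simp [hVmul]
    · rw [pow_succ, ← mul_assoc]
      exact (Set.mul_subset_mul_right ih).trans hVmul
  have hsub (n : ℕ) : V ^ (n + 1) ⊆ W * V ^ (n + 1) := by
    intro x xin
    rw [Set.mem_mul]
    exact ⟨1, einW, x, xin, one_mul x⟩
  exact iUnion_subset fun i _ a ↦ mulVpow i (hsub i a)

/-- van Dantzig -/
lemma exists_compact_open_subgroup (G : Type*) [Group G] [TopologicalSpace G]
    [IsTopologicalGroup G] [LocallyCompactSpace G] [T2Space G] [TotallyDisconnectedSpace G] :
    ∃ U : Subgroup G, IsOpen (U : Set G) ∧ IsCompact (U : Set G) := by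
  obtain ⟨K, hK, hK1⟩ := exists_compact_mem_nhds (1 : G)
  obtain ⟨W, hWclopen, hW1, hWsub⟩ :=
    loc_compact_Haus_tot_disc_of_zero_dim.mem_nhds_iff.mp hK1
  have hWc : IsCompact W := hK.of_isClosed_subset hWclopen.1 hWsub
  obtain ⟨S, hSopen, hSsub⟩ := exist_openSubgroup_sub' hWc hWclopen.2 hW1
  exact ⟨S, hSopen, hWc.of_isClosed_subset (S.isClosed_of_isOpen hSopen) hSsub⟩


variable {G : Type*} [Group G] [TopologicalSpace G] [IsTopologicalGroup G]

/-- The quasi-centre of a topological group. -/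
def quasiCentre (G : Type*) [Group G] [TopologicalSpace G] [IsTopologicalGroup G] : Subgroup G where
  carrier := {x | IsOpen ((Subgroup.centralizer {x} : Subgroup G) : Set G)}
  one_mem' := by
    have : (Subgroup.centralizer {(1 : G)} : Subgroup G) = ⊤ := by
      ext g; simp [Subgroup.mem_centralizer_singleton_iff]
    simp [Set.mem_setOf_eq, this]
  mul_mem' := by
    intro a b ha hb
    refine Subgroup.isOpen_mono (H₁ := centralizer {a} ⊓ centralizer {b}) ?_ ?_
    · intro x hx
      rw [Subgroup.mem_inf, Subgroup.mem_centralizer_singleton_iff,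
        Subgroup.mem_centralizer_singleton_iff] at hx
      rw [Subgroup.mem_centralizer_singleton_iff]
      calc x * (a * b) = (x * a) * b := by rw [mul_assoc]
        _ = a * (x * b) := by rw [hx.1, mul_assoc]
        _ = (a * b) * x := by rw [hx.2, mul_assoc]
    · rw [Subgroup.coe_inf]; exact ha.inter hb
  inv_mem' := by
    intro a ha
    have : (Subgroup.centralizer {a⁻¹} : Subgroup G) = Subgroup.centralizer {a} := by
      ext g
      simp only [Subgroup.mem_centralizer_singleton_iff]
      constructor
      · intro h
        have := congrArg (fun y => a * y * a) h
        simpa [mul_assoc] using this.symm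
      · intro h
        have := congrArg (fun y => a⁻¹ * y * a⁻¹) h
        simpa [mul_assoc] using this.symm
    rw [Set.mem_setOf_eq, this]; exact ha

lemma quasiCentre_mem_iff {x : G} :
    x ∈ quasiCentre G ↔ IsOpen ((Subgroup.centralizer {x} : Subgroup G) : Set G) := Iff.rfl

instance quasiCentre_normal : (quasiCentre G).Normal := by
  constructor
  intro n hn g
  rw [quasiCentre_mem_iff] at hn ⊢
  have key : (Subgroup.centralizer {g * n * g⁻¹} : Subgroup G)
      = (Subgroup.centralizer {n}).map (MulAut.conj g).toMonoidHom := by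
    ext x
    simp only [Subgroup.mem_map, Subgroup.mem_centralizer_singleton_iff]
    constructor
    · intro h
      refine ⟨g⁻¹ * x * g, ?_, by simp [MulAut.conj_apply, mul_assoc]⟩
      have := congrArg (fun y => g⁻¹ * y * g) h
      simpa [mul_assoc] using this
    · rintro ⟨y, hy, rfl⟩
      simp only [MulEquiv.coe_toMonoidHom, MulAut.conj_apply]
      have := congrArg (fun z => g * z * g⁻¹) hy
      simpa [mul_assoc] using this
  rw [key]
  have : ((Subgroup.centralizer {n}).map (MulAut.conj g).toMonoidHom : Set G)
      = (Homeomorph.mulLeft g).trans (Homeomorph.mulRight g⁻¹) '' (Subgroup.centralizer {n}) := by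
    ext x
    simp [Subgroup.mem_map, MulAut.conj_apply, mul_assoc]
  rw [this]
  exact (Homeomorph.isOpen_image _).mpr hn

lemma subset_closure_quasiCentre {H : Subgroup G} (hHo : IsOpen (H : Set G))
    (hd : Dense {x : ↥H | IsOpen ((Subgroup.centralizer {x} : Subgroup ↥H) : Set ↥H)}) :
    (H : Set G) ⊆ _root_.closure (quasiCentre G : Set G) := by
  have key : ∀ x : ↥H, IsOpen ((Subgroup.centralizer {x} : Subgroup ↥H) : Set ↥H) →
      (x : G) ∈ quasiCentre G := by
    intro x hx
    rw [quasiCentre_mem_iff]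
    refine Subgroup.isOpen_mono
      (H₁ := (Subgroup.centralizer {x}).map H.subtype) ?_ ?_
    · rintro - ⟨z, hz, rfl⟩
      rw [SetLike.mem_coe, Subgroup.mem_centralizer_singleton_iff] at hz
      rw [Subgroup.mem_centralizer_singleton_iff]
      exact congrArg Subtype.val hz
    · have : ((Subgroup.centralizer {x}).map H.subtype : Set G)
          = Subtype.val '' ((Subgroup.centralizer {x} : Subgroup ↥H) : Set ↥H) := by
        ext y; simp [Subgroup.mem_map]
      rw [this]
      exact hHo.isOpenMap_subtype_val _ hx
  intro g hg
  rw [mem_closure_iff]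
  intro O hO hgO
  have : (⟨g, hg⟩ : ↥H) ∈ (Subtype.val ⁻¹' O : Set ↥H) := hgO
  obtain ⟨x, hxO, hxd⟩ := hd.exists_mem_open (hO.preimage continuous_subtype_val) ⟨_, this⟩
  exact ⟨(x : G), hxd, key x hxO⟩


variable {G : Type*} [Group G] [TopologicalSpace G] [IsTopologicalGroup G]

lemma conjMap_coe (W : Subgroup G) (g : G) :
    ((W.map (MulAut.conj g).toMonoidHom : Subgroup G) : Set G)
      = ((Homeomorph.mulLeft g).trans (Homeomorph.mulRight g⁻¹)) '' (W : Set G) := by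
  ext x
  simp [Subgroup.mem_map, MulAut.conj_apply, mul_assoc]

lemma conjMap_isOpen {W : Subgroup G} (h : IsOpen (W : Set G)) (g : G) :
    IsOpen ((W.map (MulAut.conj g).toMonoidHom : Subgroup G) : Set G) := by
  rw [conjMap_coe]; exact (Homeomorph.isOpen_image _).mpr h

lemma conjMap_isCompact {W : Subgroup G} (h : IsCompact (W : Set G)) (g : G) :
    IsCompact ((W.map (MulAut.conj g).toMonoidHom : Subgroup G) : Set G) := by
  rw [conjMap_coe]
  exact h.image (Homeomorph.continuous _)

lemma conjMap_mul (W : Subgroup G) (g h : G) :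
    W.map (MulAut.conj (g * h)).toMonoidHom
      = (W.map (MulAut.conj h).toMonoidHom).map (MulAut.conj g).toMonoidHom := by
  rw [Subgroup.map_map]
  congr 1
  ext x
  simp [MulAut.conj_apply, mul_assoc]

lemma mem_conjMap_iff {W : Subgroup G} {g x : G} :
    x ∈ W.map (MulAut.conj g).toMonoidHom ↔ g⁻¹ * x * g ∈ W := by
  simp only [Subgroup.mem_map, MulAut.conj_apply]
  constructor
  · rintro ⟨y, hy, rfl⟩; simpa [mul_assoc]
  · intro h; exact ⟨g⁻¹ * x * g, h, by simp [MulAut.conj_apply, mul_assoc]⟩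

/-- Schreier: a compact generating set for an open finite-index subgroup. -/
lemma exists_compact_generating_of_finiteIndex {M : Subgroup G}
    (hMo : IsOpen (M : Set G)) [Finite (G ⧸ M)]
    (hcg : ∃ S : Set G, IsCompact S ∧ Subgroup.closure S = ⊤) :
    ∃ K : Set G, IsCompact K ∧ K ⊆ (M : Set G) ∧ Subgroup.closure K = M := by
  obtain ⟨S, hSc, hStop⟩ := hcg
  obtain ⟨R, hR, hR1⟩ := M.exists_isComplement_right 1
  have hRfin : R.Finite := by
    haveI : Finite ↑R :=
      hR.finite_right_iff.mpr M.finiteIndex_of_finite_quotient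
    exact Set.toFinite R
  have hMcl : IsClosed (M : Set G) := M.isClosed_of_isOpen hMo
  refine ⟨(R * S) * R⁻¹ ∩ (M : Set G), ?_, inter_subset_right, ?_⟩
  · exact (((hRfin.isCompact).mul hSc).mul hRfin.isCompact.inv).inter_right hMcl
  · apply le_antisymm
    · rw [Subgroup.closure_le]; exact inter_subset_right
    · refine le_trans (le_of_eq (Subgroup.closure_mul_image_eq hR hR1 hStop).symm)
        (Subgroup.closure_mono ?_)
      rintro - ⟨g, hg, rfl⟩
      refine ⟨Set.mul_mem_mul hg (Set.inv_mem_inv.mpr (hR.toRightFun g).2),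
        hR.mul_inv_toRightFun_mem g⟩


variable {G : Type*} [Group G] [TopologicalSpace G] [IsTopologicalGroup G]

lemma exists_compact_open_normal_subgroup
    [LocallyCompactSpace G] [T2Space G] [TotallyDisconnectedSpace G]
    {Q M : Subgroup G} (hQM : (M : Set G) ⊆ _root_.closure (Q : Set G))
    (hQle : Q ≤ M)
    (hQ : ∀ x ∈ Q, IsOpen ((Subgroup.centralizer {x} : Subgroup G) : Set G))
    (hMo : IsOpen (M : Set G)) (hMn : M.Normal) [Finite (G ⧸ M)]
    (hU0 : ∃ U : Subgroup G, IsOpen (U : Set G) ∧ IsCompact (U : Set G))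
    (hcg : ∃ S : Set G, IsCompact S ∧ Subgroup.closure S = ⊤) :
    ∃ N : Subgroup G, N.Normal ∧ IsOpen (N : Set G) ∧ IsCompact (N : Set G) := by
  classical
  haveI := hMn
  obtain ⟨U0, hU0o, hU0c⟩ := hU0
  set U : Subgroup G := U0 ⊓ M with hUdef
  have hUo : IsOpen (U : Set G) := by
    rw [hUdef, Subgroup.coe_inf]; exact hU0o.inter hMo
  have hUc : IsCompact (U : Set G) := by
    rw [hUdef, Subgroup.coe_inf]
    exact hU0c.inter_right (M.isClosed_of_isOpen hMo)
  have hUM : U ≤ M := inf_le_right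
  obtain ⟨K, hKc, hKM, hKgen⟩ := exists_compact_generating_of_finiteIndex hMo hcg
  -- cover K by finitely many cosets of U
  obtain ⟨t, htK, hcover⟩ := hKc.elim_nhds_subcover (fun x => x • (U : Set G))
    (fun x _ => (hUo.smul x).mem_nhds ⟨1, U.one_mem, mul_one x⟩)
  -- choose quasi-centre representatives
  have hchoose : ∀ x : G, ∃ qx : G, x ∈ t → (qx ∈ x • (U : Set G) ∧ qx ∈ Q) := by
    intro x
    by_cases hx : x ∈ t
    · have hxM : x ∈ (M : Set G) := hKM (htK x hx)
      have hopen : IsOpen (x • (U : Set G)) := hUo.smul x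
      have hxmem : x ∈ x • (U : Set G) := ⟨1, U.one_mem, mul_one x⟩
      obtain ⟨qx, hq1, hq2⟩ := mem_closure_iff.mp (hQM hxM) _ hopen hxmem
      exact ⟨qx, fun _ => ⟨hq1, hq2⟩⟩
    · exact ⟨1, fun h => absurd h hx⟩
  choose q hq using hchoose
  set QS : Finset G := t.image q with hQSdef
  have hQS_Q : ∀ y ∈ QS, y ∈ Q := by
    intro y hy
    obtain ⟨x, hx, rfl⟩ := Finset.mem_image.mp hy
    exact ((hq x) hx).2
  have hQS_M : ∀ y ∈ QS, y ∈ M := fun y hy => hQle (hQS_Q y hy)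
  -- M is contained in the closure of U ∪ QS
  set C : Subgroup G := Subgroup.closure ((U : Set G) ∪ (QS : Set G)) with hCdef
  have hUC : U ≤ C := le_trans (by exact fun a ha => Subgroup.subset_closure (Or.inl ha)) le_rfl
  have hQSC : ∀ y ∈ QS, y ∈ C := fun y hy => Subgroup.subset_closure (Or.inr hy)
  have hMC : M ≤ C := by
    rw [← hKgen, Subgroup.closure_le]
    intro k hk
    obtain ⟨x, hx, hkx⟩ := Set.mem_iUnion₂.mp (hcover hk)
    obtain ⟨u, hu, hxu⟩ := hkx
    obtain ⟨⟨u₀, hu₀, hqx⟩, hqQ⟩ := (hq x) hx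
    -- q x = x * u₀, k = x * u, so k = q x * u₀⁻¹ * u
    have : k = q x * (u₀⁻¹ * u) := by
      rw [← hxu, ← hqx]; simp only [smul_eq_mul]; group
    rw [SetLike.mem_coe, this]
    exact C.mul_mem (hQSC _ (Finset.mem_image_of_mem q hx))
      (C.mul_mem (hUC (U.inv_mem hu₀)) (hUC hu))
  -- the open subgroup V
  set V : Subgroup G := U ⊓ Subgroup.centralizer (QS : Set G) with hVdef
  have hVo : IsOpen (V : Set G) := by
    have hcen : ((Subgroup.centralizer (QS : Set G) : Subgroup G) : Set G)
        = ⋂ y ∈ QS, ((Subgroup.centralizer {y} : Subgroup G) : Set G) := by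
      ext g
      simp only [SetLike.mem_coe, Subgroup.mem_centralizer_iff, Set.mem_iInter]
      constructor
      · intro h y hy
        intro z hz
        rw [Set.mem_singleton_iff] at hz
        subst hz
        exact h _ (by exact_mod_cast hy)
      · intro h y hy
        exact h y (by exact_mod_cast hy) y rfl
    rw [hVdef, Subgroup.coe_inf, hcen]
    exact hUo.inter (isOpen_biInter_finset (fun y hy => hQ y (hQS_Q y hy)))
  have hVU : V ≤ U := inf_le_left
  -- find an open normal subgroup of U inside V
  haveI : CompactSpace ↥U := isCompact_iff_compactSpace.mp hUc
  have hW0 : IsClopen (Subtype.val ⁻¹' (V : Set G) : Set ↥U) :=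
    ⟨(V.isClosed_of_isOpen hVo).preimage continuous_subtype_val,
      hVo.preimage continuous_subtype_val⟩
  obtain ⟨H', hH'sub⟩ := IsTopologicalGroup.exist_openNormalSubgroup_sub_clopen_nhds_of_one
    hW0 (by simp [V.one_mem])
  set W : Subgroup G := H'.toSubgroup.map U.subtype with hWdef
  have hWU : W ≤ U := by
    rintro - ⟨z, hz, rfl⟩; exact z.2
  have hWV : W ≤ V := by
    rintro - ⟨z, hz, rfl⟩; exact hH'sub hz
  have hWo : IsOpen (W : Set G) := by
    have : (W : Set G) = Subtype.val '' (H'.toSubgroup : Set ↥U) := by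
      ext y; simp [hWdef, Subgroup.mem_map]
    rw [this]
    exact hUo.isOpenMap_subtype_val _ H'.isOpen
  have hWc : IsCompact (W : Set G) :=
    hUc.of_isClosed_subset (W.isClosed_of_isOpen hWo) hWU
  -- W is normalized by U and centralized by QS, hence normalized by M
  have hnormU : ∀ u ∈ U, ∀ w ∈ W, u * w * u⁻¹ ∈ W := by
    intro u hu w hw
    obtain ⟨z, hz, rfl⟩ := hw
    refine ⟨⟨u, hu⟩ * z * ⟨u, hu⟩⁻¹, H'.isNormal'.conj_mem z hz ⟨u, hu⟩, rfl⟩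
  have hnormQS : ∀ y ∈ QS, ∀ w ∈ W, y * w * y⁻¹ ∈ W := by
    intro y hy w hw
    have hcomm : y * w = w * y := by
      have h2 : w ∈ Subgroup.centralizer (QS : Set G) := (hWV hw).2
      exact Subgroup.mem_centralizer_iff.mp h2 y (by exact_mod_cast hy)
    have : y * w * y⁻¹ = w := by rw [hcomm]; group
    rw [this]; exact hw
  have hMnorm : ∀ m ∈ M, ∀ w ∈ W, m * w * m⁻¹ ∈ W := by
    have hle : M ≤ Subgroup.normalizer (W : Set G) := by
      refine le_trans hMC ?_
      rw [hCdef, Subgroup.closure_le]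
      rintro x (hx | hx)
      · rw [SetLike.mem_coe, Subgroup.mem_normalizer_iff]
        intro h
        constructor
        · intro hh
          exact hnormU x hx h hh
        · intro hh
          have h3 := hnormU x⁻¹ (U.inv_mem hx) _ hh
          have h4 : x⁻¹ * (x * h * x⁻¹) * x⁻¹⁻¹ = h := by group
          rwa [h4] at h3
      · rw [SetLike.mem_coe, Subgroup.mem_normalizer_iff]
        intro h
        constructor
        · intro hh
          exact hnormQS x hx h hh
        · intro hh
          have hcomm : x * (x * h * x⁻¹) = (x * h * x⁻¹) * x :=
            Subgroup.mem_centralizer_iff.mp ((hWV hh).2) x (by exact_mod_cast hx)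
          have h6 : (x * h * x⁻¹) * x = x * h := by group
          rw [h6] at hcomm
          have h5 : x * h * x⁻¹ = h := mul_left_cancel hcomm
          rwa [h5] at hh
    intro m hm w hw
    exact (Subgroup.mem_normalizer_iff.mp (hle hm) w).mp hw
  -- build the normal subgroup N as intersection of conjugates of W
  set φ : G → Subgroup G := fun g => W.map (MulAut.conj g).toMonoidHom with hφdef
  have hφ_coset : ∀ g m, m ∈ M → φ (g * m) = φ g := by
    intro g m hm
    have hWm : W.map (MulAut.conj m).toMonoidHom = W := by
      apply le_antisymm
      · rintro - ⟨w, hw, rfl⟩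
        simpa [MulAut.conj_apply] using hMnorm m hm w hw
      · intro w hw
        rw [mem_conjMap_iff]
        simpa using hMnorm m⁻¹ (M.inv_mem hm) w hw
    show W.map (MulAut.conj (g * m)).toMonoidHom = W.map (MulAut.conj g).toMonoidHom
    rw [conjMap_mul, hWm]
  have hφ_eq : ∀ g h : G, (g : G ⧸ M) = (h : G ⧸ M) → φ g = φ h := by
    intro g h hgh
    have hm : g⁻¹ * h ∈ M := QuotientGroup.eq.mp hgh
    have hh : h = g * (g⁻¹ * h) := by group
    rw [hh, hφ_coset g _ hm]
  set N : Subgroup G := ⨅ c : G ⧸ M, φ (Quotient.out c) with hNdef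
  have hNle : ∀ g : G, N ≤ φ g := by
    intro g
    have : φ g = φ (Quotient.out ((g : G ⧸ M))) :=
      hφ_eq _ _ (by rw [QuotientGroup.out_eq'])
    rw [this, hNdef]
    exact iInf_le _ _
  have hNo : IsOpen (N : Set G) := by
    rw [hNdef, Subgroup.coe_iInf]
    exact isOpen_iInter_of_finite fun c => conjMap_isOpen hWo _
  have hNc : IsCompact (N : Set G) := by
    refine (conjMap_isCompact hWc (Quotient.out (((1 : G) : G ⧸ M)))).of_isClosed_subset
      (N.isClosed_of_isOpen hNo) ?_
    exact SetLike.coe_subset_coe.mpr (hNle _)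
  refine ⟨N, ⟨?_⟩, hNo, hNc⟩
  intro n hn g
  rw [hNdef, Subgroup.mem_iInf]
  intro c
  have h1 : φ (Quotient.out c)
      = φ (g * Quotient.out (((g⁻¹ * Quotient.out c : G) : G ⧸ M))) := by
    apply hφ_eq
    have hkey : ((g * Quotient.out (((g⁻¹ * Quotient.out c : G) : G ⧸ M)) : G) : G ⧸ M) = c := by
      rw [QuotientGroup.mk_mul, QuotientGroup.out_eq', QuotientGroup.mk_mul, ← mul_assoc,
        ← QuotientGroup.mk_mul, mul_inv_cancel]
      simp [QuotientGroup.out_eq']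
    rw [QuotientGroup.out_eq']
    exact hkey.symm
  have h2 : g * n * g⁻¹ ∈ φ (g * Quotient.out (((g⁻¹ * Quotient.out c : G) : G ⧸ M))) := by
    show g * n * g⁻¹ ∈ W.map (MulAut.conj _).toMonoidHom
    rw [conjMap_mul]
    rw [mem_conjMap_iff]
    have h3 : g⁻¹ * (g * n * g⁻¹) * g = n := by group
    rw [h3]
    exact hNle _ hn
  rw [h1]
  exact h2


variable {G : Type*} [Group G] [TopologicalSpace G] [IsTopologicalGroup G]

lemma compactSpace_of_compact_finiteIndex {N : Subgroup G} (hNc : IsCompact (N : Set G))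
    [Finite (G ⧸ N)] : CompactSpace G := by
  rw [← isCompact_univ_iff]
  have huniv : (Set.univ : Set G) = ⋃ c : G ⧸ N, (Quotient.out c) • (N : Set G) := by
    ext g
    simp only [mem_univ, true_iff, mem_iUnion]
    refine ⟨(g : G ⧸ N), (Quotient.out ((g : G ⧸ N)))⁻¹ * g, ?_, ?_⟩
    · exact QuotientGroup.eq.mp (QuotientGroup.out_eq' (g : G ⧸ N))
    · simp only [smul_eq_mul]; group
  rw [huniv]
  exact isCompact_iUnion fun c => hNc.smul _


end Aux

/-- **Corollary (Caprace–Monod).** Let `G` be a compactly generated totally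
disconnected locally compact Hausdorff group admitting an open quasi-discrete
subgroup. Then either `G` is compact or `G` possesses an infinite discrete
quotient. -/
theorem open_quasi_discrete_subgroup (G : Type*) [Group G] [TopologicalSpace G]
    [IsTopologicalGroup G] [LocallyCompactSpace G] [T2Space G]
    [TotallyDisconnectedSpace G]
    (hcg : CompactlyGeneratedGroup G)
    (hH : ∃ H : Subgroup G, IsOpen (H : Set G) ∧
      Dense {x : ↥H | IsOpen ((Subgroup.centralizer {x} : Subgroup ↥H) : Set ↥H)}) :
    CompactSpace G ∨
    ∃ N : Subgroup G, N.Normal ∧ IsClosed (N : Set G) ∧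
      DiscreteTopology (G ⧸ N) ∧ Infinite (G ⧸ N) := by
  obtain ⟨H, hHo, hd⟩ := hH
  set Q := quasiCentre G with hQdef
  set M := Q.topologicalClosure with hMdef
  haveI hMn : M.Normal := Subgroup.is_normal_topologicalClosure Q
  have hHM : (H : Set G) ⊆ (M : Set G) := by
    rw [hMdef, Subgroup.topologicalClosure_coe]
    exact subset_closure_quasiCentre hHo hd
  have hMo : IsOpen (M : Set G) :=
    Subgroup.isOpen_mono (H₁ := H) (fun x hx => hHM hx) hHo
  haveI : DiscreteTopology (G ⧸ M) := QuotientGroup.discreteTopology hMo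
  rcases finite_or_infinite (G ⧸ M) with hfin | hinf
  · -- M has finite index; construct a compact open normal subgroup
    have hQM : (M : Set G) ⊆ _root_.closure (Q : Set G) := by
      rw [hMdef, Subgroup.topologicalClosure_coe]
    have hQle : Q ≤ M := Subgroup.le_topologicalClosure Q
    have hQop : ∀ x ∈ Q, IsOpen ((Subgroup.centralizer {x} : Subgroup G) : Set G) :=
      fun x hx => quasiCentre_mem_iff.mp hx
    obtain ⟨N, hNn, hNo, hNc⟩ := exists_compact_open_normal_subgroup hQM hQle hQop hMo hMn
      (exists_compact_open_subgroup G) hcg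
    haveI : DiscreteTopology (G ⧸ N) := QuotientGroup.discreteTopology hNo
    rcases finite_or_infinite (G ⧸ N) with hNfin | hNinf
    · exact Or.inl (compactSpace_of_compact_finiteIndex hNc)
    · exact Or.inr ⟨N, hNn, N.isClosed_of_isOpen hNo, inferInstance, hNinf⟩
  · exact Or.inr ⟨M, hMn, Subgroup.isClosed_topologicalClosure Q, inferInstance, hinf⟩
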